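/- Let z₁, z₂ be two distinct unit vectors in ℝ² with z₁ ≠ −z₂, and let y = −(z₁+z₂)/‖z₁+z₂‖. Then the Euclidean gradient at y of the function x ↦ (1/2)(ρ(x,z₁)² + ρ(x,z₂)²), where ρ(x,z) = arccos⟨x,z⟩, is orthogonal to the tangent space of the unit circle at y (i.e., y is a critical point of the restricted function), yet y is not the minimizer of this function over the unit circle. -/

import Mathlib

open RealInnerProductSpace

set_option maxHeartbeats 1000000 in
/-- On the circle `S¹ ⊂ ℝ²` with geodesic distance `ρ(x,z) = arccos⟨x,z⟩`, the point
`y = -(z₁+z₂)/‖z₁+z₂‖` is a Karcher mean of `{z₁, z₂}` with weights `(1/2, 1/2)`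
(the Euclidean gradient of the variance functional at `y` is orthogonal to the
tangent space of the circle at `y`), but it is not the minimizer over the circle. -/
theorem karcher_mean_not_barycenter_circle
    (z₁ z₂ : EuclideanSpace ℝ (Fin 2))
    (hz₁ : ‖z₁‖ = 1) (hz₂ : ‖z₂‖ = 1) (hne : z₁ ≠ z₂) (hnopp : z₁ ≠ -z₂)
    (f : EuclideanSpace ℝ (Fin 2) → ℝ)
    (hf : f = fun x => (1 / 2) * ((Real.arccos ⟪x, z₁⟫) ^ 2 + (Real.arccos ⟪x, z₂⟫) ^ 2))
    (y : EuclideanSpace ℝ (Fin 2))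
    (hy : y = -(‖z₁ + z₂‖⁻¹ • (z₁ + z₂))) :
    (∀ v : EuclideanSpace ℝ (Fin 2), ⟪v, y⟫ = 0 → ⟪gradient f y, v⟫ = 0) ∧
      ∃ x : EuclideanSpace ℝ (Fin 2), ‖x‖ = 1 ∧ f x < f y := by
  set c : ℝ := ⟪z₁, z₂⟫ with hc
  have hcomm : ⟪z₂, z₁⟫ = c := by rw [hc]; exact real_inner_comm z₁ z₂
  have hsum_ne : z₁ + z₂ ≠ 0 := by
    intro h0
    exact hnopp (by linear_combination (norm := abel) h0)
  have hc1 : c < 1 := by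
    have h := real_inner_self_eq_norm_sq (z₁ - z₂)
    have hd : z₁ - z₂ ≠ 0 := sub_ne_zero.mpr hne
    have hpos : (0:ℝ) < ‖z₁ - z₂‖ ^ 2 := pow_pos (norm_pos_iff.mpr hd) 2
    rw [inner_sub_sub_self] at h
    simp only [real_inner_self_eq_norm_sq, hz₁, hz₂, hcomm] at h
    nlinarith
  have hc2 : -1 < c := by
    have h := real_inner_self_eq_norm_sq (z₁ + z₂)
    have hpos : (0:ℝ) < ‖z₁ + z₂‖ ^ 2 := pow_pos (norm_pos_iff.mpr hsum_ne) 2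
    rw [inner_add_add_self] at h
    simp only [real_inner_self_eq_norm_sq, hz₁, hz₂, hcomm] at h
    nlinarith
  set n : ℝ := ‖z₁ + z₂‖ with hn
  have hnpos : 0 < n := norm_pos_iff.mpr hsum_ne
  have hn2 : n ^ 2 = 2 + 2 * c := by
    have h := real_inner_self_eq_norm_sq (z₁ + z₂)
    rw [inner_add_add_self] at h
    simp only [real_inner_self_eq_norm_sq, hz₁, hz₂, hcomm] at h
    rw [← hn] at h
    linarith
  have h1c : (0:ℝ) < 1 + c := by linarith
  have ht1 : ⟪y, z₁⟫ = -(n⁻¹ * (1 + c)) := by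
    simp only [hy, inner_neg_left, real_inner_smul_left, inner_add_left,
      real_inner_self_eq_norm_sq, hz₁, hcomm]
    ring
  have ht2 : ⟪y, z₂⟫ = -(n⁻¹ * (1 + c)) := by
    simp only [hy, inner_neg_left, real_inner_smul_left, inner_add_left,
      real_inner_self_eq_norm_sq, hz₂, ← hc]
    ring
  set t : ℝ := -(n⁻¹ * (1 + c)) with htdef
  have htsq : t ^ 2 * n ^ 2 = (1 + c) ^ 2 := by
    have hinv : n⁻¹ * n = 1 := inv_mul_cancel₀ (ne_of_gt hnpos)
    rw [htdef]
    linear_combination (1 + c) ^ 2 * (n⁻¹ * n + 1) * hinv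
  have htneg : t < 0 := by
    rw [htdef]
    nlinarith [mul_pos (inv_pos.mpr hnpos) h1c]
  have ht2lt : t ^ 2 < 1 := by
    nlinarith [htsq, hn2, mul_pos h1c (show (0:ℝ) < 1 - c by linarith)]
  have htgt : -1 < t := by nlinarith [ht2lt, sq_nonneg (t + 1)]
  have ht_ne1 : t ≠ 1 := by linarith
  have ht_ne1' : t ≠ -1 := by linarith
  -- gradient computation
  set k : ℝ := 2 * Real.arccos t ^ 1 * -(1 / Real.sqrt (1 - t ^ 2)) with hk
  have hd : HasDerivAt (fun s : ℝ => Real.arccos s ^ 2) k t :=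
    (Real.hasDerivAt_arccos ht_ne1' ht_ne1).pow 2
  have hinner₁ : HasFDerivAt (fun x : EuclideanSpace ℝ (Fin 2) => ⟪x, z₁⟫)
      (innerSL ℝ z₁) y := by
    have he : (fun x : EuclideanSpace ℝ (Fin 2) => ⟪x, z₁⟫)
        = fun x => innerSL ℝ z₁ x := by
      funext x; rw [innerSL_apply_apply]; exact real_inner_comm z₁ x
    rw [he]
    exact (innerSL ℝ z₁).hasFDerivAt
  have hinner₂ : HasFDerivAt (fun x : EuclideanSpace ℝ (Fin 2) => ⟪x, z₂⟫)
      (innerSL ℝ z₂) y := by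
    have he : (fun x : EuclideanSpace ℝ (Fin 2) => ⟪x, z₂⟫)
        = fun x => innerSL ℝ z₂ x := by
      funext x; rw [innerSL_apply_apply]; exact real_inner_comm z₂ x
    rw [he]
    exact (innerSL ℝ z₂).hasFDerivAt
  have hd₁ : HasDerivAt (fun s : ℝ => Real.arccos s ^ 2) k (⟪y, z₁⟫) := by
    rw [ht1]; exact hd
  have hd₂ : HasDerivAt (fun s : ℝ => Real.arccos s ^ 2) k (⟪y, z₂⟫) := by
    rw [ht2]; exact hd
  have hφ₁ : HasFDerivAt (fun x : EuclideanSpace ℝ (Fin 2) => Real.arccos ⟪x, z₁⟫ ^ 2)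
      (k • innerSL ℝ z₁) y := by have := hd₁.comp_hasFDerivAt y hinner₁; exact this
  have hφ₂ : HasFDerivAt (fun x : EuclideanSpace ℝ (Fin 2) => Real.arccos ⟪x, z₂⟫ ^ 2)
      (k • innerSL ℝ z₂) y := by have := hd₂.comp_hasFDerivAt y hinner₂; exact this
  have hF : HasFDerivAt f ((1/2 : ℝ) • (k • innerSL ℝ z₁ + k • innerSL ℝ z₂)) y := by
    rw [hf]
    exact (hφ₁.add hφ₂).const_mul (1/2 : ℝ)
  set g : EuclideanSpace ℝ (Fin 2) := (1/2 : ℝ) • (k • z₁ + k • z₂) with hg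
  have hGrad : HasGradientAt f g y := by
    rw [hasGradientAt_iff_hasFDerivAt]
    refine hF.congr_fderiv ?_
    apply ContinuousLinearMap.ext
    intro v
    simp [hg, InnerProductSpace.toDual_apply_apply, inner_add_left, real_inner_smul_left,
      ContinuousLinearMap.smul_apply, ContinuousLinearMap.add_apply]
  have hgrad_eq : gradient f y = g := hGrad.gradient
  constructor
  · intro v hv
    have hyv : ⟪z₁, v⟫ + ⟪z₂, v⟫ = 0 := by
      have h1 : ⟪y, v⟫ = 0 := by rw [real_inner_comm]; exact hv
      rw [hy] at h1
      simp only [inner_neg_left, real_inner_smul_left, inner_add_left] at h1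
      have hninv : n⁻¹ ≠ 0 := inv_ne_zero (ne_of_gt hnpos)
      have h2 := neg_eq_zero.mp h1
      exact (mul_eq_zero.mp h2).resolve_left hninv
    rw [hgrad_eq, hg]
    simp only [real_inner_smul_left, inner_add_left]
    linear_combination (k / 2) * hyv
  · refine ⟨-y, ?_, ?_⟩
    · rw [hy, norm_neg, norm_neg, norm_smul, norm_inv, norm_norm]
      exact inv_mul_cancel₀ (ne_of_gt hnpos)
    · have hiy1 : ⟪-y, z₁⟫ = -t := by rw [inner_neg_left, ht1]
      have hiy2 : ⟪-y, z₂⟫ = -t := by rw [inner_neg_left, ht2]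
      rw [hf]
      simp only [hiy1, hiy2, ht1, ht2, ← htdef]
      have h1 : Real.arccos (-t) < Real.arccos t := by
        have ha : Real.arccos (-t) < Real.pi / 2 := Real.arccos_lt_pi_div_two.mpr (by linarith)
        have hb : Real.arccos t = Real.pi - Real.arccos (-t) := by
          rw [← Real.arccos_neg (-t), neg_neg]
        rw [hb]
        linarith [Real.pi_pos]
      have h2 : Real.arccos (-t) ^ 2 < Real.arccos t ^ 2 := by
        nlinarith [Real.arccos_nonneg (-t), Real.arccos_nonneg t]
      linarith
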